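/- Let U, V ∈ ℝ^{n×d} and k ≥ 1 an integer, and let T_U^{(k)}, T_V^{(k)} ∈ ℝ^{n×m} be degree-k TensorSketches of U and V built from the same random hash functions h_1,…,h_k and sign functions s_1,…,s_k. Then E[ ‖(UVᵀ)^{⊙k} − T_U^{(k)} T_V^{(k)ᵀ}‖_F² ] ≤ (2 + 3^k) · (Σ_{i=1}^n (Σ_{j=1}^d U_{ij}²)^k) · (Σ_{i=1}^n (Σ_{j=1}^d V_{ij}²)^k) / m, where A^{⊙k} denotes the matrix of entrywise k-th powers [A_{ij}^k] and ‖·‖_F is the Frobenius norm. -/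

import Mathlib

open Matrix
open scoped BigOperators

noncomputable section

/-- The real value of a Boolean sign. -/
def sgn (b : Bool) : ℝ := if b then 1 else -1

/-- Degree-`k` TensorSketch of `u ∈ ℝ^d` built from hash functions
`h 0, …, h (k-1) : [d] → {0,…,m-1}` and sign functions `s 0, …, s (k-1)`. -/
def tSketch {d m : ℕ} [NeZero m] (k : ℕ) (h : Fin k → Fin d → Fin m)
    (s : Fin k → Fin d → Bool) (u : Fin d → ℝ) : Fin m → ℝ :=
  fun j => ∑ i : Fin k → Fin d,
    if (∑ t, h t (i t)) = j then ∏ t, (sgn (s t (i t)) * u (i t)) else 0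

/-- Row-wise TensorSketch of a matrix `U ∈ ℝ^{n×d}`. -/
def tSketchM {n d m : ℕ} [NeZero m] (k : ℕ) (h : Fin k → Fin d → Fin m)
    (s : Fin k → Fin d → Bool) (U : Matrix (Fin n) (Fin d) ℝ) :
    Matrix (Fin n) (Fin m) ℝ :=
  Matrix.of fun i => tSketch k h s (U i)

/-- Squared Frobenius norm. -/
def frobSq {α β : Type*} [Fintype α] [Fintype β] (A : Matrix α β ℝ) : ℝ :=
  ∑ i, ∑ j, (A i j)^2

/-- Expectation over the hash functions `h t` and the sign functions `s t`,
drawn independently and uniformly at random. -/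
def expHS {k d m : ℕ}
    (F : (Fin k → Fin d → Fin m) → (Fin k → Fin d → Bool) → ℝ) : ℝ :=
  (∑ h : Fin k → Fin d → Fin m, ∑ s : Fin k → Fin d → Bool, F h s) /
    ((Fintype.card (Fin k → Fin d → Fin m)) * (Fintype.card (Fin k → Fin d → Bool)))

namespace TSAux

open Finset

/- ## Generic sum manipulation helpers -/

lemma sum_fun_prod {ι κ : Type*} [Fintype ι] [Fintype κ] [DecidableEq ι] (F : ι → κ → ℝ) :
    ∑ g : ι → κ, ∏ i, F i (g i) = ∏ i, ∑ x : κ, F i x := by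
  rw [← Fintype.piFinset_univ, Finset.sum_prod_piFinset]

lemma sum4_comm {α β γ δ : Type*} [Fintype α] [Fintype β] [Fintype γ] [Fintype δ]
    (f : α → β → γ → δ → ℝ) :
    ∑ a, ∑ b, ∑ c, ∑ e, f a b c e = ∑ c, ∑ e, ∑ a, ∑ b, f a b c e := by
  calc ∑ a, ∑ b, ∑ c, ∑ e, f a b c e
      = ∑ a, ∑ c, ∑ b, ∑ e, f a b c e := Finset.sum_congr rfl (fun a _ => Finset.sum_comm)
    _ = ∑ c, ∑ a, ∑ b, ∑ e, f a b c e := Finset.sum_comm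
    _ = ∑ c, ∑ a, ∑ e, ∑ b, f a b c e :=
        Finset.sum_congr rfl (fun c _ => Finset.sum_congr rfl (fun a _ => Finset.sum_comm))
    _ = ∑ c, ∑ e, ∑ a, ∑ b, f a b c e := Finset.sum_congr rfl (fun c _ => Finset.sum_comm)

lemma sum4_factor {A : Type*} [Fintype A] (f g : A → A → ℝ) :
    ∑ a : A, ∑ b : A, ∑ c : A, ∑ e : A, f a b * g c e
      = (∑ a, ∑ b, f a b) * (∑ c, ∑ e, g c e) := by
  simp only [← Finset.mul_sum, ← Finset.sum_mul]

lemma sum4_swap_bc {A : Type*} [Fintype A] (F : A → A → A → A → ℝ) :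
    ∑ a : A, ∑ b, ∑ c, ∑ e, F a b c e = ∑ a, ∑ c, ∑ b, ∑ e, F a b c e :=
  Finset.sum_congr rfl (fun _a _ => Finset.sum_comm)

lemma sum4_move_e {A : Type*} [Fintype A] (F : A → A → A → A → ℝ) :
    ∑ a : A, ∑ b, ∑ c, ∑ e, F a b c e = ∑ a, ∑ e, ∑ b, ∑ c, F a b c e := by
  refine Finset.sum_congr rfl (fun a _ => ?_)
  calc ∑ b, ∑ c, ∑ e, F a b c e
      = ∑ b, ∑ e, ∑ c, F a b c e := Finset.sum_congr rfl (fun b _ => Finset.sum_comm)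
    _ = ∑ e, ∑ b, ∑ c, F a b c e := Finset.sum_comm

lemma sum2_diag {A : Type*} [Fintype A] [DecidableEq A] (f : A → A → ℝ) :
    ∑ a : A, ∑ b : A, (if a = b then f a b else 0) = ∑ a, f a a := by
  refine Finset.sum_congr rfl (fun a _ => ?_)
  rw [Finset.sum_ite_eq univ a (fun b => f a b)]
  simp

/- ## Sign computations -/

lemma prod_pow_single {d : ℕ} (F : Fin d → ℝ) (a : Fin d) :
    ∏ x, F x ^ (if x = a then 1 else 0) = F a := by
  simp [Finset.prod_ite_eq', pow_ite]

lemma sum_sgn_pow (e : ℕ) : ∑ b : Bool, sgn b ^ e = if Even e then 2 else 0 := by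
  by_cases h : Even e
  · simp [sgn, h, Even.neg_pow]
  · simp [sgn, h, Odd.neg_pow (Nat.not_even_iff_odd.1 h)]

/-- ε predicate: the four indices pair up. -/
def eps {d : ℕ} (a b c e : Fin d) : Prop := (a = b ∧ c = e) ∨ (a = c ∧ b = e) ∨ (a = e ∧ b = c)

instance {d : ℕ} (a b c e : Fin d) : Decidable (eps a b c e) := by unfold eps; infer_instance

lemma even_iff_eps {d : ℕ} (a b c e : Fin d) :
    (∀ x : Fin d, Even ((if x = a then 1 else 0) + (if x = b then 1 else 0)
      + (if x = c then 1 else 0) + (if x = e then 1 else 0))) ↔ eps a b c e := by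
  constructor
  · intro H
    have Ha := H a; have Hb := H b; have Hc := H c; have He := H e
    unfold eps
    by_cases hab : a = b <;> by_cases hac : a = c <;> by_cases hae : a = e <;>
      by_cases hbc : b = c <;> by_cases hbe : b = e <;> by_cases hce : c = e <;>
      simp_all [Nat.even_iff] <;> omega
  · intro H x
    rcases H with ⟨h1, h2⟩ | ⟨h1, h2⟩ | ⟨h1, h2⟩ <;> subst h1 <;> subst h2 <;>
      split_ifs <;> simp_all [Nat.even_iff]

lemma even_iff_two {d : ℕ} (a b : Fin d) :
    (∀ x : Fin d, Even ((if x = a then 1 else 0) + (if x = b then 1 else 0))) ↔ a = b := by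
  constructor
  · intro H
    have Ha := H a
    by_cases hab : a = b <;> simp_all [Nat.even_iff]
  · rintro rfl x; by_cases hx : x = a <;> simp [hx]

lemma sum_sgn_two {d : ℕ} (a b : Fin d) :
    ∑ w : Fin d → Bool, sgn (w a) * sgn (w b) = if a = b then (2:ℝ)^d else 0 := by
  have key : ∀ w : Fin d → Bool, sgn (w a) * sgn (w b)
      = ∏ x, sgn (w x) ^ ((if x = a then 1 else 0) + (if x = b then 1 else 0)) := by
    intro w
    simp only [pow_add, Finset.prod_mul_distrib, prod_pow_single]
  simp only [key]
  refine (sum_fun_prod (fun x (b' : Bool) => sgn b' ^ ((if x = a then 1 else 0)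
    + (if x = b then 1 else 0)))).trans ?_
  simp only [sum_sgn_pow]
  by_cases h : ∀ x : Fin d, Even ((if x = a then 1 else 0) + (if x = b then 1 else 0))
  · rw [if_pos ((even_iff_two a b).1 h)]
    calc ∏ x : Fin d, (if Even ((if x = a then 1 else 0) + (if x = b then 1 else 0)) then (2:ℝ) else 0)
        = ∏ _x : Fin d, (2:ℝ) := Finset.prod_congr rfl (fun x _ => by rw [if_pos (h x)])
      _ = 2 ^ d := by simp
  · rw [if_neg (fun hab => h ((even_iff_two a b).2 hab))]
    push_neg at h
    obtain ⟨x, hx⟩ := h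
    exact Finset.prod_eq_zero (Finset.mem_univ x) (by rw [if_neg hx])

lemma sum_sgn_four {d : ℕ} (a b c e : Fin d) :
    ∑ w : Fin d → Bool, sgn (w a) * sgn (w b) * sgn (w c) * sgn (w e)
      = if eps a b c e then (2:ℝ)^d else 0 := by
  have key : ∀ w : Fin d → Bool, sgn (w a) * sgn (w b) * sgn (w c) * sgn (w e)
      = ∏ x, sgn (w x) ^ ((if x = a then 1 else 0) + (if x = b then 1 else 0)
          + (if x = c then 1 else 0) + (if x = e then 1 else 0)) := by
    intro w
    simp only [pow_add, Finset.prod_mul_distrib, prod_pow_single]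
  simp only [key]
  refine (sum_fun_prod (fun x (b' : Bool) => sgn b' ^ ((if x = a then 1 else 0)
    + (if x = b then 1 else 0) + (if x = c then 1 else 0) + (if x = e then 1 else 0)))).trans ?_
  simp only [sum_sgn_pow]
  by_cases h : ∀ x : Fin d, Even ((if x = a then 1 else 0) + (if x = b then 1 else 0)
          + (if x = c then 1 else 0) + (if x = e then 1 else 0))
  · rw [if_pos ((even_iff_eps a b c e).1 h)]
    calc (∏ x : Fin d, if Even ((if x = a then 1 else 0) + (if x = b then 1 else 0)
          + (if x = c then 1 else 0) + (if x = e then 1 else 0)) then (2:ℝ) else 0)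
        = ∏ _x : Fin d, (2:ℝ) := Finset.prod_congr rfl (fun x _ => by rw [if_pos (h x)])
      _ = 2 ^ d := by simp
  · rw [if_neg (fun hab => h ((even_iff_eps a b c e).2 hab))]
    push_neg at h
    obtain ⟨x, hx⟩ := h
    exact Finset.prod_eq_zero (Finset.mem_univ x) (by rw [if_neg hx])

/- ## Hash counting -/

/-- Shift equiv: add `c` to the value of `h t0` at point `p`. -/
def shiftEquiv {d m k : ℕ} [NeZero m] (t0 : Fin k) (p : Fin d) (c : Fin m) :
    (Fin k → Fin d → Fin m) ≃ (Fin k → Fin d → Fin m) where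
  toFun h := fun t a => if t = t0 ∧ a = p then h t a + c else h t a
  invFun h := fun t a => if t = t0 ∧ a = p then h t a - c else h t a
  left_inv h := by
    funext t a; by_cases hh : t = t0 ∧ a = p <;> simp [hh]
  right_inv h := by
    funext t a; by_cases hh : t = t0 ∧ a = p <;> simp [hh]

lemma hash_count {d m k : ℕ} [NeZero m] (i i' : Fin k → Fin d) (t0 : Fin k)
    (ht : i t0 ≠ i' t0) :
    (∑ h : Fin k → Fin d → Fin m,
        (if (∑ t, h t (i t)) = (∑ t, h t (i' t)) then (1:ℝ) else 0)) * m
      = Fintype.card (Fin k → Fin d → Fin m) := by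
  set Φ : (Fin k → Fin d → Fin m) → Fin m :=
    fun h => (∑ t, h t (i t)) - (∑ t, h t (i' t)) with hΦ
  have hshift : ∀ (c : Fin m) (h : Fin k → Fin d → Fin m),
      Φ (shiftEquiv t0 (i t0) c h) = Φ h + c := by
    intro c h
    have h1 : ∑ t, (shiftEquiv t0 (i t0) c h) t (i t) = (∑ t, h t (i t)) + c := by
      have : ∀ t, (shiftEquiv t0 (i t0) c h) t (i t)
          = h t (i t) + (if t = t0 then c else 0) := by
        intro t
        by_cases htt : t = t0
        · subst htt; simp [shiftEquiv]
        · simp [shiftEquiv, htt]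
      rw [Finset.sum_congr rfl (fun t _ => this t), Finset.sum_add_distrib]
      simp
    have h2 : ∑ t, (shiftEquiv t0 (i t0) c h) t (i' t) = ∑ t, h t (i' t) := by
      refine Finset.sum_congr rfl (fun t _ => ?_)
      by_cases htt : t = t0
      · subst htt; simp [shiftEquiv, ht.symm, fun hc : i' t = i t => ht hc.symm]
      · simp [shiftEquiv, htt]
    simp [hΦ, h1, h2]; abel
  have fiber : ∀ c : Fin m,
      (∑ h : Fin k → Fin d → Fin m, (if Φ h = c then (1:ℝ) else 0))
      = ∑ h : Fin k → Fin d → Fin m, (if Φ h = 0 then (1:ℝ) else 0) := by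
    intro c
    rw [← Equiv.sum_comp (shiftEquiv t0 (i t0) c)
      (fun h => if Φ h = c then (1:ℝ) else 0)]
    refine Finset.sum_congr rfl (fun h _ => ?_)
    rw [hshift c h]
    congr 1
    simp [add_eq_right]
  have total : (Fintype.card (Fin k → Fin d → Fin m) : ℝ)
      = ∑ c : Fin m, ∑ h : Fin k → Fin d → Fin m, (if Φ h = c then (1:ℝ) else 0) := by
    rw [Finset.sum_comm]
    simp [Finset.sum_ite_eq]
  have hcond : ∀ h : Fin k → Fin d → Fin m,
      ((∑ t, h t (i t)) = (∑ t, h t (i' t))) ↔ Φ h = 0 := by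
    intro h
    simp only [hΦ]
    exact sub_eq_zero.symm
  rw [total]
  have : ∀ c : Fin m, ∑ h : Fin k → Fin d → Fin m, (if Φ h = c then (1:ℝ) else 0)
      = ∑ h : Fin k → Fin d → Fin m,
        (if (∑ t, h t (i t)) = (∑ t, h t (i' t)) then (1:ℝ) else 0) := by
    intro c
    rw [fiber c]
    exact Finset.sum_congr rfl (fun h _ => by rw [if_congr (hcond h).symm rfl rfl])
  rw [Finset.sum_congr rfl (fun c _ => this c)]
  simp [mul_comm]

/- ## Basic quantities -/

variable {d m k : ℕ} [NeZero m]

def Pv (u : Fin d → ℝ) (i : Fin k → Fin d) : ℝ := ∏ t, u (i t)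
def Sg (s : Fin k → Fin d → Bool) (i : Fin k → Fin d) : ℝ := ∏ t, sgn (s t (i t))
def Hh (h : Fin k → Fin d → Fin m) (i : Fin k → Fin d) : Fin m := ∑ t, h t (i t)
def chi (h : Fin k → Fin d → Fin m) (i i' : Fin k → Fin d) : ℝ :=
  if Hh h i = Hh h i' then 1 else 0

lemma chi_nonneg (h : Fin k → Fin d → Fin m) (i i' : Fin k → Fin d) : 0 ≤ chi h i i' := by
  unfold chi; split_ifs <;> norm_num

lemma chi_le_one (h : Fin k → Fin d → Fin m) (i i' : Fin k → Fin d) : chi h i i' ≤ 1 := by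
  unfold chi; split_ifs <;> norm_num

lemma chi_diag (h : Fin k → Fin d → Fin m) (i : Fin k → Fin d) : chi h i i = 1 := by
  unfold chi; rw [if_pos rfl]

lemma collapse (x y : Fin m) (A B : ℝ) :
    ∑ j : Fin m, (if x = j then A else 0) * (if y = j then B else 0)
      = A * B * (if x = y then (1:ℝ) else 0) := by
  simp only [ite_mul, zero_mul, mul_ite, mul_zero]
  rw [Finset.sum_ite_eq univ y (fun j => if x = j then A * B else 0)]
  simp only [Finset.mem_univ, if_true]
  by_cases hc : x = y
  · rw [if_pos (hc ▸ rfl), if_pos hc]; ring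
  · rw [if_neg (fun hx : x = y => hc hx), if_neg hc]

lemma sketch_inner (h : Fin k → Fin d → Fin m) (s : Fin k → Fin d → Bool)
    (u v : Fin d → ℝ) :
    ∑ j, tSketch k h s u j * tSketch k h s v j
      = ∑ i : Fin k → Fin d, ∑ i' : Fin k → Fin d,
          Sg s i * Sg s i' * (Pv u i * Pv v i') * chi h i i' := by
  have tdef : ∀ (w : Fin d → ℝ) (j : Fin m), tSketch k h s w j
      = ∑ i : Fin k → Fin d, (if Hh h i = j then Sg s i * Pv w i else 0) := by
    intro w j
    unfold tSketch Hh Sg Pv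
    exact Finset.sum_congr rfl (fun i _ => by rw [Finset.prod_mul_distrib])
  simp only [tdef, Finset.sum_mul_sum]
  rw [Finset.sum_comm]
  refine Finset.sum_congr rfl (fun i _ => ?_)
  rw [Finset.sum_comm]
  refine Finset.sum_congr rfl (fun i' _ => ?_)
  rw [collapse]
  unfold chi
  ring

lemma sum_Sg2 (i i' : Fin k → Fin d) :
    ∑ s : Fin k → Fin d → Bool, Sg s i * Sg s i'
      = if i = i' then ((2:ℝ)^d)^k else 0 := by
  have key : ∀ s : Fin k → Fin d → Bool, Sg s i * Sg s i'
      = ∏ t, (sgn (s t (i t)) * sgn (s t (i' t))) := by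
    intro s; unfold Sg; rw [Finset.prod_mul_distrib]
  simp only [key]
  refine (sum_fun_prod (fun t (w : Fin d → Bool) => sgn (w (i t)) * sgn (w (i' t)))).trans ?_
  simp only [sum_sgn_two]
  by_cases hc : i = i'
  · subst hc; simp
  · obtain ⟨t0, ht0⟩ := Function.ne_iff.1 hc
    rw [if_neg hc]
    exact Finset.prod_eq_zero (Finset.mem_univ t0) (by rw [if_neg ht0])

lemma sum_Sg4 (i i' j j' : Fin k → Fin d) :
    ∑ s : Fin k → Fin d → Bool, Sg s i * Sg s i' * Sg s j * Sg s j'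
      = ∏ t, (if eps (i t) (i' t) (j t) (j' t) then (2:ℝ)^d else 0) := by
  have key : ∀ s : Fin k → Fin d → Bool, Sg s i * Sg s i' * Sg s j * Sg s j'
      = ∏ t, (sgn (s t (i t)) * sgn (s t (i' t)) * sgn (s t (j t)) * sgn (s t (j' t))) := by
    intro s; unfold Sg; simp only [Finset.prod_mul_distrib]
  simp only [key]
  refine (sum_fun_prod (fun t (w : Fin d → Bool) => sgn (w (i t)) * sgn (w (i' t))
    * sgn (w (j t)) * sgn (w (j' t)))).trans ?_
  exact Finset.prod_congr rfl (fun t _ => sum_sgn_four _ _ _ _)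

/- ## single-coordinate bound -/

def Gfun {d : ℕ} (u v : Fin d → ℝ) (a b c e : Fin d) : ℝ :=
  (if eps a b c e then (2:ℝ)^d else 0) * (|u a| * |v b| * (|u c| * |v e|))

lemma Gfun_nonneg {d : ℕ} (u v : Fin d → ℝ) (a b c e : Fin d) : 0 ≤ Gfun u v a b c e := by
  unfold Gfun; split_ifs <;> positivity

lemma sum_G_le {d : ℕ} (u v : Fin d → ℝ) :
    ∑ a, ∑ b, ∑ c, ∑ e, Gfun u v a b c e
      ≤ (2:ℝ)^d * (3 * ((∑ a, u a ^ 2) * (∑ a, v a ^ 2))) := by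
  set α := ∑ a, u a ^ 2 with hα
  set β := ∑ a, v a ^ 2 with hβ
  have hCS : (∑ a, |u a| * |v a|)^2 ≤ α * β := by
    have := Finset.sum_mul_sq_le_sq_mul_sq univ (fun a => |u a|) (fun a => |v a|)
    simpa [sq_abs] using this
  -- pointwise bound by three indicator terms
  have pt : ∀ a b c e : Fin d, Gfun u v a b c e ≤
      (2:ℝ)^d * (((if a = b then (1:ℝ) else 0) * (if c = e then (1:ℝ) else 0))
        * (|u a| * |v b| * (|u c| * |v e|))
      + ((if a = c then (1:ℝ) else 0) * (if b = e then (1:ℝ) else 0))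
        * (|u a| * |v b| * (|u c| * |v e|))
      + ((if a = e then (1:ℝ) else 0) * (if b = c then (1:ℝ) else 0))
        * (|u a| * |v b| * (|u c| * |v e|))) := by
    intro a b c e
    unfold Gfun
    by_cases hE : eps a b c e
    · rw [if_pos hE]
      have habs : (0:ℝ) ≤ |u a| * |v b| * (|u c| * |v e|) := by positivity
      have hone : (1:ℝ) ≤ (if a = b then (1:ℝ) else 0) * (if c = e then (1:ℝ) else 0)
          + (if a = c then (1:ℝ) else 0) * (if b = e then (1:ℝ) else 0)
          + (if a = e then (1:ℝ) else 0) * (if b = c then (1:ℝ) else 0) := by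
        have n1 : (0:ℝ) ≤ (if a = b then (1:ℝ) else 0) * (if c = e then (1:ℝ) else 0) := by
          split_ifs <;> norm_num
        have n2 : (0:ℝ) ≤ (if a = c then (1:ℝ) else 0) * (if b = e then (1:ℝ) else 0) := by
          split_ifs <;> norm_num
        have n3 : (0:ℝ) ≤ (if a = e then (1:ℝ) else 0) * (if b = c then (1:ℝ) else 0) := by
          split_ifs <;> norm_num
        rcases hE with ⟨h1, h2⟩ | ⟨h1, h2⟩ | ⟨h1, h2⟩ <;> rw [if_pos h1, if_pos h2] <;> nlinarith
      have h2d : (0:ℝ) ≤ (2:ℝ)^d := by positivity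
      nlinarith [mul_nonneg (mul_nonneg h2d habs) (sub_nonneg.2 hone)]
    · rw [if_neg hE, zero_mul]
      have n1 : (0:ℝ) ≤ ((if a = b then (1:ℝ) else 0) * (if c = e then (1:ℝ) else 0)) := by
        split_ifs <;> norm_num
      have n2 : (0:ℝ) ≤ ((if a = c then (1:ℝ) else 0) * (if b = e then (1:ℝ) else 0)) := by
        split_ifs <;> norm_num
      have n3 : (0:ℝ) ≤ ((if a = e then (1:ℝ) else 0) * (if b = c then (1:ℝ) else 0)) := by
        split_ifs <;> norm_num
      have habs : (0:ℝ) ≤ |u a| * |v b| * (|u c| * |v e|) := by positivity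
      have h2d : (0:ℝ) ≤ (2:ℝ)^d := by positivity
      have m1 := mul_nonneg n1 habs
      have m2 := mul_nonneg n2 habs
      have m3 := mul_nonneg n3 habs
      nlinarith
  have step : ∑ a, ∑ b, ∑ c, ∑ e, Gfun u v a b c e ≤
      ∑ a : Fin d, ∑ b, ∑ c, ∑ e, (2:ℝ)^d * (((if a = b then (1:ℝ) else 0) * (if c = e then (1:ℝ) else 0))
        * (|u a| * |v b| * (|u c| * |v e|))
      + ((if a = c then (1:ℝ) else 0) * (if b = e then (1:ℝ) else 0))
        * (|u a| * |v b| * (|u c| * |v e|))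
      + ((if a = e then (1:ℝ) else 0) * (if b = c then (1:ℝ) else 0))
        * (|u a| * |v b| * (|u c| * |v e|))) := by
    refine Finset.sum_le_sum (fun a _ => Finset.sum_le_sum (fun b _ =>
      Finset.sum_le_sum (fun c _ => Finset.sum_le_sum (fun e _ => pt a b c e))))
  refine step.trans ?_
  -- split into three sums
  have distrib : ∑ a : Fin d, ∑ b, ∑ c, ∑ e, (2:ℝ)^d * ((((if a = b then (1:ℝ) else 0) * (if c = e then (1:ℝ) else 0))
        * (|u a| * |v b| * (|u c| * |v e|)))
      + ((if a = c then (1:ℝ) else 0) * (if b = e then (1:ℝ) else 0))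
        * (|u a| * |v b| * (|u c| * |v e|))
      + ((if a = e then (1:ℝ) else 0) * (if b = c then (1:ℝ) else 0))
        * (|u a| * |v b| * (|u c| * |v e|)))
      = (2:ℝ)^d * ((∑ a : Fin d, ∑ b, ∑ c, ∑ e, ((if a = b then (1:ℝ) else 0) * (if c = e then (1:ℝ) else 0))
        * (|u a| * |v b| * (|u c| * |v e|)))
      + (∑ a : Fin d, ∑ b, ∑ c, ∑ e, ((if a = c then (1:ℝ) else 0) * (if b = e then (1:ℝ) else 0))
        * (|u a| * |v b| * (|u c| * |v e|)))
      + (∑ a : Fin d, ∑ b, ∑ c, ∑ e, ((if a = e then (1:ℝ) else 0) * (if b = c then (1:ℝ) else 0))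
        * (|u a| * |v b| * (|u c| * |v e|)))) := by
    simp only [Finset.mul_sum, Finset.sum_add_distrib, mul_add]
  rw [distrib]
  -- T1
  have T1 : (∑ a : Fin d, ∑ b, ∑ c, ∑ e, ((if a = b then (1:ℝ) else 0) * (if c = e then (1:ℝ) else 0))
        * (|u a| * |v b| * (|u c| * |v e|))) ≤ α * β := by
    have eq1 : ∀ a b c e : Fin d, ((if a = b then (1:ℝ) else 0) * (if c = e then (1:ℝ) else 0))
        * (|u a| * |v b| * (|u c| * |v e|))
        = (if a = b then |u a| * |v b| else 0) * (if c = e then |u c| * |v e| else 0) := by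
      intro a b c e; split_ifs <;> ring
    calc (∑ a : Fin d, ∑ b, ∑ c, ∑ e, ((if a = b then (1:ℝ) else 0) * (if c = e then (1:ℝ) else 0))
        * (|u a| * |v b| * (|u c| * |v e|)))
        = ∑ a : Fin d, ∑ b, ∑ c, ∑ e, (if a = b then |u a| * |v b| else 0) * (if c = e then |u c| * |v e| else 0) := by
          simp only [eq1]
      _ = (∑ a : Fin d, ∑ b, (if a = b then |u a| * |v b| else 0))
          * (∑ c : Fin d, ∑ e, (if c = e then |u c| * |v e| else 0)) := sum4_factor _ _
      _ = (∑ a : Fin d, |u a| * |v a|) * (∑ c : Fin d, |u c| * |v c|) := by rw [sum2_diag]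
      _ = (∑ a : Fin d, |u a| * |v a|)^2 := (sq _).symm
      _ ≤ α * β := hCS
  -- T2
  have T2 : (∑ a : Fin d, ∑ b, ∑ c, ∑ e, ((if a = c then (1:ℝ) else 0) * (if b = e then (1:ℝ) else 0))
        * (|u a| * |v b| * (|u c| * |v e|))) ≤ α * β := by
    have eq1 : ∀ a b c e : Fin d, ((if a = c then (1:ℝ) else 0) * (if b = e then (1:ℝ) else 0))
        * (|u a| * |v b| * (|u c| * |v e|))
        = (if a = c then |u a| * |u c| else 0) * (if b = e then |v b| * |v e| else 0) := by
      intro a b c e; split_ifs <;> ring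
    calc (∑ a : Fin d, ∑ b, ∑ c, ∑ e, ((if a = c then (1:ℝ) else 0) * (if b = e then (1:ℝ) else 0))
        * (|u a| * |v b| * (|u c| * |v e|)))
        = ∑ a : Fin d, ∑ b, ∑ c, ∑ e, (if a = c then |u a| * |u c| else 0) * (if b = e then |v b| * |v e| else 0) := by
          simp only [eq1]
      _ = ∑ a : Fin d, ∑ c, ∑ b, ∑ e, (if a = c then |u a| * |u c| else 0) * (if b = e then |v b| * |v e| else 0) :=
          sum4_swap_bc _
      _ = (∑ a : Fin d, ∑ c, (if a = c then |u a| * |u c| else 0))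
          * (∑ b : Fin d, ∑ e, (if b = e then |v b| * |v e| else 0)) := sum4_factor _ _
      _ = (∑ a : Fin d, |u a| * |u a|) * (∑ b : Fin d, |v b| * |v b|) := by rw [sum2_diag, sum2_diag]
      _ = α * β := by
          rw [hα, hβ]
          congr 1 <;> exact Finset.sum_congr rfl (fun x _ => by rw [abs_mul_abs_self, sq])
      _ ≤ α * β := le_refl _
  -- T3
  have T3 : (∑ a : Fin d, ∑ b, ∑ c, ∑ e, ((if a = e then (1:ℝ) else 0) * (if b = c then (1:ℝ) else 0))
        * (|u a| * |v b| * (|u c| * |v e|))) ≤ α * β := by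
    have eq1 : ∀ a b c e : Fin d, ((if a = e then (1:ℝ) else 0) * (if b = c then (1:ℝ) else 0))
        * (|u a| * |v b| * (|u c| * |v e|))
        = (if a = e then |u a| * |v e| else 0) * (if b = c then |v b| * |u c| else 0) := by
      intro a b c e; split_ifs <;> ring
    calc (∑ a : Fin d, ∑ b, ∑ c, ∑ e, ((if a = e then (1:ℝ) else 0) * (if b = c then (1:ℝ) else 0))
        * (|u a| * |v b| * (|u c| * |v e|)))
        = ∑ a : Fin d, ∑ b, ∑ c, ∑ e, (if a = e then |u a| * |v e| else 0) * (if b = c then |v b| * |u c| else 0) := by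
          simp only [eq1]
      _ = ∑ a : Fin d, ∑ e, ∑ b, ∑ c, (if a = e then |u a| * |v e| else 0) * (if b = c then |v b| * |u c| else 0) :=
          sum4_move_e _
      _ = (∑ a : Fin d, ∑ e, (if a = e then |u a| * |v e| else 0))
          * (∑ b : Fin d, ∑ c, (if b = c then |v b| * |u c| else 0)) := sum4_factor _ _
      _ = (∑ a : Fin d, |u a| * |v a|) * (∑ b : Fin d, |v b| * |u b|) := by rw [sum2_diag, sum2_diag]
      _ = (∑ a : Fin d, |u a| * |v a|)^2 := by
          rw [sq]; congr 1; exact Finset.sum_congr rfl (fun x _ => mul_comm _ _)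
      _ ≤ α * β := hCS
  have h2d : (0:ℝ) ≤ (2:ℝ)^d := by positivity
  have := add_le_add (add_le_add T1 T2) T3
  nlinarith

lemma fact4 {d k : ℕ} (G : Fin d → Fin d → Fin d → Fin d → ℝ) :
    ∑ i : Fin k → Fin d, ∑ i' : Fin k → Fin d, ∑ j : Fin k → Fin d, ∑ j' : Fin k → Fin d,
        ∏ t, G (i t) (i' t) (j t) (j' t)
      = (∑ a, ∑ b, ∑ c, ∑ e, G a b c e) ^ k := by
  have h1 : ∀ i i' j : Fin k → Fin d, ∑ j' : Fin k → Fin d, ∏ t, G (i t) (i' t) (j t) (j' t)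
      = ∏ t, ∑ e, G (i t) (i' t) (j t) e :=
    fun i i' j => sum_fun_prod (fun t e => G (i t) (i' t) (j t) e)
  have h2 : ∀ i i' : Fin k → Fin d, ∑ j : Fin k → Fin d, ∏ t, ∑ e, G (i t) (i' t) (j t) e
      = ∏ t, ∑ c, ∑ e, G (i t) (i' t) c e :=
    fun i i' => sum_fun_prod (fun t c => ∑ e, G (i t) (i' t) c e)
  have h3 : ∀ i : Fin k → Fin d, ∑ i' : Fin k → Fin d, ∏ t, ∑ c, ∑ e, G (i t) (i' t) c e
      = ∏ t, ∑ b, ∑ c, ∑ e, G (i t) b c e :=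
    fun i => sum_fun_prod (fun t b => ∑ c, ∑ e, G (i t) b c e)
  have h4 : ∑ i : Fin k → Fin d, ∏ t, ∑ b, ∑ c, ∑ e, G (i t) b c e
      = ∏ _t : Fin k, ∑ a, ∑ b, ∑ c, ∑ e, G a b c e :=
    sum_fun_prod (fun _t a => ∑ b, ∑ c, ∑ e, G a b c e)
  calc ∑ i : Fin k → Fin d, ∑ i' : Fin k → Fin d, ∑ j : Fin k → Fin d, ∑ j' : Fin k → Fin d,
        ∏ t, G (i t) (i' t) (j t) (j' t)
      = ∑ i : Fin k → Fin d, ∑ i' : Fin k → Fin d, ∑ j : Fin k → Fin d,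
          ∏ t, ∑ e, G (i t) (i' t) (j t) e := by
        exact Finset.sum_congr rfl (fun i _ => Finset.sum_congr rfl (fun i' _ =>
          Finset.sum_congr rfl (fun j _ => h1 i i' j)))
    _ = ∑ i : Fin k → Fin d, ∑ i' : Fin k → Fin d, ∏ t, ∑ c, ∑ e, G (i t) (i' t) c e :=
        Finset.sum_congr rfl (fun i _ => Finset.sum_congr rfl (fun i' _ => h2 i i'))
    _ = ∑ i : Fin k → Fin d, ∏ t, ∑ b, ∑ c, ∑ e, G (i t) b c e :=
        Finset.sum_congr rfl (fun i _ => h3 i)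
    _ = ∏ _t : Fin k, ∑ a, ∑ b, ∑ c, ∑ e, G a b c e := h4
    _ = (∑ a, ∑ b, ∑ c, ∑ e, G a b c e) ^ k := by
        rw [Finset.prod_const, Finset.card_univ, Fintype.card_fin]


lemma sq_double_sum {A : Type*} [Fintype A] (f : A → A → ℝ) :
    (∑ i, ∑ i', f i i')^2 = ∑ i, ∑ i', ∑ j, ∑ j', f i i' * f j j' := by
  calc (∑ i, ∑ i', f i i')^2
      = ∑ i, ∑ j, ((∑ i', f i i') * (∑ j', f j j')) := by rw [sq, Finset.sum_mul_sum]
    _ = ∑ i, ∑ j, ∑ i', ∑ j', f i i' * f j j' :=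
        Finset.sum_congr rfl (fun i _ => Finset.sum_congr rfl (fun j _ => Finset.sum_mul_sum _ _ _ _))
    _ = ∑ i, ∑ i', ∑ j, ∑ j', f i i' * f j j' :=
        Finset.sum_congr rfl (fun i _ => Finset.sum_comm)

lemma entry_bound (u v : Fin d → ℝ) :
    ∑ h : Fin k → Fin d → Fin m, ∑ s : Fin k → Fin d → Bool,
      ((∑ a, u a * v a) ^ k - ∑ j, tSketch k h s u j * tSketch k h s v j) ^ 2
    ≤ (Fintype.card (Fin k → Fin d → Fin m) : ℝ) * (Fintype.card (Fin k → Fin d → Bool))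
      * (3 ^ k * (∑ a, u a ^ 2) ^ k * (∑ a, v a ^ 2) ^ k / m) := by
  classical
  set Mh := ((Fintype.card (Fin k → Fin d → Fin m)) : ℝ) with hMh
  set Ms := ((Fintype.card (Fin k → Fin d → Bool)) : ℝ) with hMs
  have hm0 : (0:ℝ) < m := by exact_mod_cast (NeZero.pos m)
  have hMh2 : Mh = ((m:ℝ)^d)^k := by
    rw [hMh]; simp [Fintype.card_fun]; try push_cast; try ring
  have hMs2 : Ms = ((2:ℝ)^d)^k := by
    rw [hMs]; simp [Fintype.card_fun]; try push_cast; try ring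
  set c := (∑ a, u a * v a) ^ k with hc
  set α := ∑ a, u a ^ 2 with hα
  set β := ∑ a, v a ^ 2 with hβ
  have c_eq : c = ∑ i : Fin k → Fin d, Pv u i * Pv v i := by
    rw [hc, Finset.sum_pow', Fintype.piFinset_univ]
    exact Finset.sum_congr rfl (fun i _ => by unfold Pv; rw [← Finset.prod_mul_distrib])
  -- Step 1: unbiasedness
  have key1 : ∑ h : Fin k → Fin d → Fin m, ∑ s : Fin k → Fin d → Bool,
      (∑ j, tSketch k h s u j * tSketch k h s v j) = Mh * Ms * c := by
    have e1 : ∀ (h : Fin k → Fin d → Fin m) (s : Fin k → Fin d → Bool),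
        (∑ j, tSketch k h s u j * tSketch k h s v j)
        = ∑ i : Fin k → Fin d, ∑ i' : Fin k → Fin d,
            Sg s i * Sg s i' * (Pv u i * Pv v i') * chi h i i' :=
      fun h s => sketch_inner h s u v
    calc ∑ h : Fin k → Fin d → Fin m, ∑ s : Fin k → Fin d → Bool,
        (∑ j, tSketch k h s u j * tSketch k h s v j)
        = ∑ h : Fin k → Fin d → Fin m, ∑ s : Fin k → Fin d → Bool,
            ∑ i : Fin k → Fin d, ∑ i' : Fin k → Fin d,
              Sg s i * Sg s i' * (Pv u i * Pv v i') * chi h i i' := by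
          exact Finset.sum_congr rfl (fun h _ => Finset.sum_congr rfl (fun s _ => e1 h s))
      _ = ∑ i : Fin k → Fin d, ∑ i' : Fin k → Fin d,
            ∑ h : Fin k → Fin d → Fin m, ∑ s : Fin k → Fin d → Bool,
              Sg s i * Sg s i' * (Pv u i * Pv v i') * chi h i i' := sum4_comm _
      _ = ∑ i : Fin k → Fin d, ∑ i' : Fin k → Fin d,
            (∑ s : Fin k → Fin d → Bool, Sg s i * Sg s i') * (Pv u i * Pv v i')
              * (∑ h : Fin k → Fin d → Fin m, chi h i i') := by
          refine Finset.sum_congr rfl (fun i _ => Finset.sum_congr rfl (fun i' _ => ?_))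
          have : (∑ s : Fin k → Fin d → Bool, Sg s i * Sg s i') * (Pv u i * Pv v i')
              * (∑ h : Fin k → Fin d → Fin m, chi h i i')
              = ∑ h : Fin k → Fin d → Fin m, ∑ s : Fin k → Fin d → Bool,
                  Sg s i * Sg s i' * (Pv u i * Pv v i') * chi h i i' := by
            rw [Finset.mul_sum]
            refine Finset.sum_congr rfl (fun h _ => ?_)
            rw [Finset.sum_mul, Finset.sum_mul]
          exact this.symm
      _ = ∑ i : Fin k → Fin d, ∑ i' : Fin k → Fin d,
            (if i = i' then Ms * (Pv u i * Pv v i')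
              * (∑ h : Fin k → Fin d → Fin m, chi h i i') else 0) := by
          refine Finset.sum_congr rfl (fun i _ => Finset.sum_congr rfl (fun i' _ => ?_))
          rw [sum_Sg2, ← hMs2]
          by_cases hii : i = i'
          · rw [if_pos hii, if_pos hii]
          · rw [if_neg hii, if_neg hii, zero_mul, zero_mul]
      _ = ∑ i : Fin k → Fin d, Ms * (Pv u i * Pv v i)
            * (∑ h : Fin k → Fin d → Fin m, chi h i i) := by
          refine Finset.sum_congr rfl (fun i _ => ?_)
          rw [Finset.sum_ite_eq univ i]
          simp
      _ = ∑ i : Fin k → Fin d, (Mh * Ms) * (Pv u i * Pv v i) := by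
          refine Finset.sum_congr rfl (fun i _ => ?_)
          have : ∑ h : Fin k → Fin d → Fin m, chi h i i
              = Mh := by
            simp only [chi_diag]
            rw [hMh]; simp
          rw [this]; ring
      _ = Mh * Ms * c := by rw [← Finset.mul_sum, ← c_eq]
  -- Step 2: second moment bound
  have key2 : ∑ h : Fin k → Fin d → Fin m, ∑ s : Fin k → Fin d → Bool,
      (∑ j, tSketch k h s u j * tSketch k h s v j)^2
      ≤ Mh * Ms * c^2 + Mh * Ms * (3^k * α^k * β^k / m) := by
    have e1 : ∀ (h : Fin k → Fin d → Fin m) (s : Fin k → Fin d → Bool),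
        (∑ j, tSketch k h s u j * tSketch k h s v j)^2
        = ∑ i : Fin k → Fin d, ∑ i' : Fin k → Fin d, ∑ j : Fin k → Fin d, ∑ j' : Fin k → Fin d,
            (Sg s i * Sg s i' * (Pv u i * Pv v i') * chi h i i')
              * (Sg s j * Sg s j' * (Pv u j * Pv v j') * chi h j j') := by
      intro h s
      rw [sketch_inner h s u v, sq_double_sum]
    have swap : ∑ h : Fin k → Fin d → Fin m, ∑ s : Fin k → Fin d → Bool,
        (∑ j, tSketch k h s u j * tSketch k h s v j)^2
        = ∑ i : Fin k → Fin d, ∑ i' : Fin k → Fin d, ∑ j : Fin k → Fin d, ∑ j' : Fin k → Fin d,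
            ∑ h : Fin k → Fin d → Fin m, ∑ s : Fin k → Fin d → Bool,
            (Sg s i * Sg s i' * (Pv u i * Pv v i') * chi h i i')
              * (Sg s j * Sg s j' * (Pv u j * Pv v j') * chi h j j') := by
      calc ∑ h : Fin k → Fin d → Fin m, ∑ s : Fin k → Fin d → Bool,
          (∑ j, tSketch k h s u j * tSketch k h s v j)^2
          = ∑ h : Fin k → Fin d → Fin m, ∑ s : Fin k → Fin d → Bool,
            ∑ i : Fin k → Fin d, ∑ i' : Fin k → Fin d, ∑ j : Fin k → Fin d, ∑ j' : Fin k → Fin d,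
            (Sg s i * Sg s i' * (Pv u i * Pv v i') * chi h i i')
              * (Sg s j * Sg s j' * (Pv u j * Pv v j') * chi h j j') :=
            Finset.sum_congr rfl (fun h _ => Finset.sum_congr rfl (fun s _ => e1 h s))
        _ = ∑ i : Fin k → Fin d, ∑ i' : Fin k → Fin d,
            ∑ h : Fin k → Fin d → Fin m, ∑ s : Fin k → Fin d → Bool,
            ∑ j : Fin k → Fin d, ∑ j' : Fin k → Fin d,
            (Sg s i * Sg s i' * (Pv u i * Pv v i') * chi h i i')
              * (Sg s j * Sg s j' * (Pv u j * Pv v j') * chi h j j') := sum4_comm _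
        _ = ∑ i : Fin k → Fin d, ∑ i' : Fin k → Fin d, ∑ j : Fin k → Fin d, ∑ j' : Fin k → Fin d,
            ∑ h : Fin k → Fin d → Fin m, ∑ s : Fin k → Fin d → Bool,
            (Sg s i * Sg s i' * (Pv u i * Pv v i') * chi h i i')
              * (Sg s j * Sg s j' * (Pv u j * Pv v j') * chi h j j') :=
            Finset.sum_congr rfl (fun i _ => Finset.sum_congr rfl (fun i' _ => sum4_comm _))
    rw [swap]
    have hterm : ∀ i i' j j' : Fin k → Fin d,
        (∑ h : Fin k → Fin d → Fin m, ∑ s : Fin k → Fin d → Bool,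
          (Sg s i * Sg s i' * (Pv u i * Pv v i') * chi h i i')
            * (Sg s j * Sg s j' * (Pv u j * Pv v j') * chi h j j'))
        = (∏ t, (if eps (i t) (i' t) (j t) (j' t) then (2:ℝ)^d else 0))
          * (Pv u i * Pv v i' * (Pv u j * Pv v j'))
          * (∑ h : Fin k → Fin d → Fin m, chi h i i' * chi h j j') := by
      intro i i' j j'
      have pointwise : ∀ (h : Fin k → Fin d → Fin m) (s : Fin k → Fin d → Bool),
          (Sg s i * Sg s i' * (Pv u i * Pv v i') * chi h i i')
            * (Sg s j * Sg s j' * (Pv u j * Pv v j') * chi h j j')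
          = Sg s i * Sg s i' * Sg s j * Sg s j'
            * (Pv u i * Pv v i' * (Pv u j * Pv v j')) * (chi h i i' * chi h j j') := by
        intro h s; ring
      have exp : (∑ s : Fin k → Fin d → Bool, Sg s i * Sg s i' * Sg s j * Sg s j')
            * (Pv u i * Pv v i' * (Pv u j * Pv v j'))
            * (∑ h : Fin k → Fin d → Fin m, chi h i i' * chi h j j')
          = ∑ h : Fin k → Fin d → Fin m, ∑ s : Fin k → Fin d → Bool,
            (Sg s i * Sg s i' * (Pv u i * Pv v i') * chi h i i')
              * (Sg s j * Sg s j' * (Pv u j * Pv v j') * chi h j j') := by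
        rw [Finset.mul_sum]
        refine Finset.sum_congr rfl (fun h _ => ?_)
        rw [Finset.sum_mul, Finset.sum_mul]
        exact Finset.sum_congr rfl (fun s _ => (pointwise h s).symm)
      rw [← exp, sum_Sg4]
    calc (∑ i : Fin k → Fin d, ∑ i' : Fin k → Fin d, ∑ j : Fin k → Fin d, ∑ j' : Fin k → Fin d,
            ∑ h : Fin k → Fin d → Fin m, ∑ s : Fin k → Fin d → Bool,
            (Sg s i * Sg s i' * (Pv u i * Pv v i') * chi h i i')
              * (Sg s j * Sg s j' * (Pv u j * Pv v j') * chi h j j'))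
        = ∑ i : Fin k → Fin d, ∑ i' : Fin k → Fin d, ∑ j : Fin k → Fin d, ∑ j' : Fin k → Fin d,
            ((if (i = i' ∧ j = j') then
              (∏ t, (if eps (i t) (i' t) (j t) (j' t) then (2:ℝ)^d else 0))
              * (Pv u i * Pv v i' * (Pv u j * Pv v j'))
              * (∑ h : Fin k → Fin d → Fin m, chi h i i' * chi h j j') else 0)
            + (if (i = i' ∧ j = j') then 0 else
              (∏ t, (if eps (i t) (i' t) (j t) (j' t) then (2:ℝ)^d else 0))
              * (Pv u i * Pv v i' * (Pv u j * Pv v j'))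
              * (∑ h : Fin k → Fin d → Fin m, chi h i i' * chi h j j'))) := by
          refine Finset.sum_congr rfl (fun i _ => Finset.sum_congr rfl (fun i' _ =>
            Finset.sum_congr rfl (fun j _ => Finset.sum_congr rfl (fun j' _ => ?_))))
          rw [hterm i i' j j']
          split_ifs <;> ring
      _ = (∑ i : Fin k → Fin d, ∑ i' : Fin k → Fin d, ∑ j : Fin k → Fin d, ∑ j' : Fin k → Fin d,
            (if (i = i' ∧ j = j') then
              (∏ t, (if eps (i t) (i' t) (j t) (j' t) then (2:ℝ)^d else 0))
              * (Pv u i * Pv v i' * (Pv u j * Pv v j'))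
              * (∑ h : Fin k → Fin d → Fin m, chi h i i' * chi h j j') else 0))
          + (∑ i : Fin k → Fin d, ∑ i' : Fin k → Fin d, ∑ j : Fin k → Fin d, ∑ j' : Fin k → Fin d,
            (if (i = i' ∧ j = j') then 0 else
              (∏ t, (if eps (i t) (i' t) (j t) (j' t) then (2:ℝ)^d else 0))
              * (Pv u i * Pv v i' * (Pv u j * Pv v j'))
              * (∑ h : Fin k → Fin d → Fin m, chi h i i' * chi h j j'))) := by
          simp only [Finset.sum_add_distrib]
      _ ≤ Mh * Ms * c^2 + Mh * Ms * (3^k * α^k * β^k / m) := by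
          have hMhn : (0:ℝ) ≤ Mh := by rw [hMh]; positivity
          have diag1 : ∀ i i' j j' : Fin k → Fin d,
              (if (i = i' ∧ j = j') then
                (∏ t, (if eps (i t) (i' t) (j t) (j' t) then (2:ℝ)^d else 0))
                * (Pv u i * Pv v i' * (Pv u j * Pv v j'))
                * (∑ h : Fin k → Fin d → Fin m, chi h i i' * chi h j j') else 0)
              = (if i = i' then Pv u i * Pv v i' else 0)
                * ((if j = j' then Pv u j * Pv v j' else 0) * (Mh * Ms)) := by
            intro i i' j j'
            by_cases h1 : i = i'
            · by_cases h2 : j = j'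
              · subst h1; subst h2
                rw [if_pos ⟨rfl, rfl⟩, if_pos rfl, if_pos rfl]
                have hS4 : (∏ t, (if eps (i t) (i t) (j t) (j t) then (2:ℝ)^d else 0)) = Ms := by
                  have hepsd : ∀ t : Fin k, (if eps (i t) (i t) (j t) (j t) then (2:ℝ)^d else 0)
                      = (2:ℝ)^d := by
                    intro t; simp [eps]
                  calc (∏ t, (if eps (i t) (i t) (j t) (j t) then (2:ℝ)^d else 0))
                      = ∏ _t : Fin k, (2:ℝ)^d := Finset.prod_congr rfl (fun t _ => hepsd t)
                    _ = ((2:ℝ)^d)^k := by simp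
                    _ = Ms := hMs2.symm
                have hC4 : (∑ h : Fin k → Fin d → Fin m, chi h i i * chi h j j) = Mh := by
                  simp only [chi_diag, mul_one]
                  rw [hMh]; simp
                rw [hS4, hC4]; ring
              · rw [if_neg (fun hx => h2 hx.2), if_neg h2]; ring
            · rw [if_neg (fun hx => h1 hx.1), if_neg h1]; ring
          have part1 : (∑ i : Fin k → Fin d, ∑ i' : Fin k → Fin d, ∑ j : Fin k → Fin d,
              ∑ j' : Fin k → Fin d,
              (if (i = i' ∧ j = j') then
                (∏ t, (if eps (i t) (i' t) (j t) (j' t) then (2:ℝ)^d else 0))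
                * (Pv u i * Pv v i' * (Pv u j * Pv v j'))
                * (∑ h : Fin k → Fin d → Fin m, chi h i i' * chi h j j') else 0))
              = Mh * Ms * c^2 := by
            calc (∑ i : Fin k → Fin d, ∑ i' : Fin k → Fin d, ∑ j : Fin k → Fin d,
                ∑ j' : Fin k → Fin d,
                (if (i = i' ∧ j = j') then
                  (∏ t, (if eps (i t) (i' t) (j t) (j' t) then (2:ℝ)^d else 0))
                  * (Pv u i * Pv v i' * (Pv u j * Pv v j'))
                  * (∑ h : Fin k → Fin d → Fin m, chi h i i' * chi h j j') else 0))
                = ∑ i : Fin k → Fin d, ∑ i' : Fin k → Fin d, ∑ j : Fin k → Fin d,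
                  ∑ j' : Fin k → Fin d,
                  (if i = i' then Pv u i * Pv v i' else 0)
                    * ((if j = j' then Pv u j * Pv v j' else 0) * (Mh * Ms)) := by
                  exact Finset.sum_congr rfl (fun i _ => Finset.sum_congr rfl (fun i' _ =>
                    Finset.sum_congr rfl (fun j _ => Finset.sum_congr rfl (fun j' _ =>
                      diag1 i i' j j'))))
              _ = (∑ i : Fin k → Fin d, ∑ i' : Fin k → Fin d,
                    (if i = i' then Pv u i * Pv v i' else 0))
                  * (∑ j : Fin k → Fin d, ∑ j' : Fin k → Fin d,
                    (if j = j' then Pv u j * Pv v j' else 0) * (Mh * Ms)) := sum4_factor _ _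
              _ = Mh * Ms * c^2 := by
                  have e2 : (∑ j : Fin k → Fin d, ∑ j' : Fin k → Fin d,
                      (if j = j' then Pv u j * Pv v j' else 0) * (Mh * Ms))
                      = (∑ j : Fin k → Fin d, Pv u j * Pv v j) * (Mh * Ms) := by
                    simp only [← Finset.sum_mul]
                    rw [sum2_diag]
                  rw [e2, sum2_diag, ← c_eq]; ring
          have offb : ∀ i i' j j' : Fin k → Fin d,
              (if (i = i' ∧ j = j') then 0 else
                (∏ t, (if eps (i t) (i' t) (j t) (j' t) then (2:ℝ)^d else 0))
                * (Pv u i * Pv v i' * (Pv u j * Pv v j'))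
                * (∑ h : Fin k → Fin d → Fin m, chi h i i' * chi h j j'))
              ≤ (∏ t, Gfun u v (i t) (i' t) (j t) (j' t)) * (Mh / m) := by
            intro i i' j j'
            have hS4n : 0 ≤ ∏ t, (if eps (i t) (i' t) (j t) (j' t) then (2:ℝ)^d else 0) :=
              Finset.prod_nonneg (fun t _ => by split_ifs <;> positivity)
            have hGprod : (∏ t, (if eps (i t) (i' t) (j t) (j' t) then (2:ℝ)^d else 0))
                * |Pv u i * Pv v i' * (Pv u j * Pv v j')|
                = ∏ t, Gfun u v (i t) (i' t) (j t) (j' t) := by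
              unfold Gfun
              rw [Finset.prod_mul_distrib]
              congr 1
              unfold Pv
              simp only [abs_mul, Finset.abs_prod, Finset.prod_mul_distrib]
            have hGn : 0 ≤ ∏ t, Gfun u v (i t) (i' t) (j t) (j' t) :=
              Finset.prod_nonneg (fun t _ => Gfun_nonneg u v _ _ _ _)
            have hMdm : (0:ℝ) ≤ Mh / m := div_nonneg hMhn hm0.le
            by_cases hD : i = i' ∧ j = j'
            · rw [if_pos hD]; exact mul_nonneg hGn hMdm
            · rw [if_neg hD]
              by_cases hS : (∏ t, (if eps (i t) (i' t) (j t) (j' t) then (2:ℝ)^d else 0)) = 0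
              · rw [hS, zero_mul, zero_mul]; exact mul_nonneg hGn hMdm
              · have hex : ∃ t0, i t0 ≠ i' t0 := by
                  by_contra hno
                  push_neg at hno
                  have hii : i = i' := funext hno
                  have hjj : ¬ j = j' := fun hx => hD ⟨hii, hx⟩
                  obtain ⟨t0, ht0⟩ := Function.ne_iff.1 hjj
                  apply hS
                  refine Finset.prod_eq_zero (Finset.mem_univ t0) ?_
                  rw [if_neg]
                  rintro (⟨_, h2⟩ | ⟨ha, hb⟩ | ⟨ha, hb⟩)
                  · exact ht0 h2
                  · exact ht0 (by rw [← ha, hno t0, hb])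
                  · exact ht0 (by rw [← hb, ← hno t0, ha])
                obtain ⟨t0, ht0⟩ := hex
                have hcount : (∑ h : Fin k → Fin d → Fin m, chi h i i') * m = Mh := by
                  rw [hMh]
                  have hcnt := hash_count (m := m) i i' t0 ht0
                  simp only [chi, Hh]
                  convert hcnt using 3
                  split_ifs with hp <;> simp [hp]
                have hchi : ∑ h : Fin k → Fin d → Fin m, chi h i i' = Mh / m := by
                  rw [eq_div_iff hm0.ne']; exact hcount
                have hC4le : (∑ h : Fin k → Fin d → Fin m, chi h i i' * chi h j j') ≤ Mh / m := by
                  rw [← hchi]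
                  exact Finset.sum_le_sum (fun h _ =>
                    mul_le_of_le_one_right (chi_nonneg h i i') (chi_le_one h j j'))
                have hC4n : 0 ≤ ∑ h : Fin k → Fin d → Fin m, chi h i i' * chi h j j' :=
                  Finset.sum_nonneg (fun h _ =>
                    mul_nonneg (chi_nonneg h i i') (chi_nonneg h j j'))
                calc (∏ t, (if eps (i t) (i' t) (j t) (j' t) then (2:ℝ)^d else 0))
                    * (Pv u i * Pv v i' * (Pv u j * Pv v j'))
                    * (∑ h : Fin k → Fin d → Fin m, chi h i i' * chi h j j')
                    ≤ (∏ t, (if eps (i t) (i' t) (j t) (j' t) then (2:ℝ)^d else 0))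
                      * |Pv u i * Pv v i' * (Pv u j * Pv v j')|
                      * (∑ h : Fin k → Fin d → Fin m, chi h i i' * chi h j j') := by
                      exact mul_le_mul_of_nonneg_right
                        (mul_le_mul_of_nonneg_left (le_abs_self _) hS4n) hC4n
                  _ ≤ (∏ t, (if eps (i t) (i' t) (j t) (j' t) then (2:ℝ)^d else 0))
                      * |Pv u i * Pv v i' * (Pv u j * Pv v j')| * (Mh / m) :=
                      mul_le_mul_of_nonneg_left hC4le
                        (mul_nonneg hS4n (abs_nonneg _))
                  _ = (∏ t, Gfun u v (i t) (i' t) (j t) (j' t)) * (Mh / m) := by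
                      rw [hGprod]
          have part2 : (∑ i : Fin k → Fin d, ∑ i' : Fin k → Fin d, ∑ j : Fin k → Fin d,
              ∑ j' : Fin k → Fin d,
              (if (i = i' ∧ j = j') then 0 else
                (∏ t, (if eps (i t) (i' t) (j t) (j' t) then (2:ℝ)^d else 0))
                * (Pv u i * Pv v i' * (Pv u j * Pv v j'))
                * (∑ h : Fin k → Fin d → Fin m, chi h i i' * chi h j j')))
              ≤ Mh * Ms * (3^k * α^k * β^k / m) := by
            have hMdm : (0:ℝ) ≤ Mh / m := div_nonneg hMhn hm0.le
            have hsum_nonneg : (0:ℝ) ≤ ∑ a, ∑ b, ∑ cc, ∑ e, Gfun u v a b cc e :=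
              Finset.sum_nonneg (fun a _ => Finset.sum_nonneg (fun b _ =>
                Finset.sum_nonneg (fun cc _ => Finset.sum_nonneg (fun e _ =>
                  Gfun_nonneg u v a b cc e))))
            calc (∑ i : Fin k → Fin d, ∑ i' : Fin k → Fin d, ∑ j : Fin k → Fin d,
                ∑ j' : Fin k → Fin d,
                (if (i = i' ∧ j = j') then 0 else
                  (∏ t, (if eps (i t) (i' t) (j t) (j' t) then (2:ℝ)^d else 0))
                  * (Pv u i * Pv v i' * (Pv u j * Pv v j'))
                  * (∑ h : Fin k → Fin d → Fin m, chi h i i' * chi h j j')))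
                ≤ ∑ i : Fin k → Fin d, ∑ i' : Fin k → Fin d, ∑ j : Fin k → Fin d,
                  ∑ j' : Fin k → Fin d,
                  (∏ t, Gfun u v (i t) (i' t) (j t) (j' t)) * (Mh / m) := by
                  exact Finset.sum_le_sum (fun i _ => Finset.sum_le_sum (fun i' _ =>
                    Finset.sum_le_sum (fun j _ => Finset.sum_le_sum (fun j' _ =>
                      offb i i' j j'))))
              _ = (∑ i : Fin k → Fin d, ∑ i' : Fin k → Fin d, ∑ j : Fin k → Fin d,
                  ∑ j' : Fin k → Fin d, ∏ t, Gfun u v (i t) (i' t) (j t) (j' t)) * (Mh / m) := by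
                  simp only [← Finset.sum_mul]
              _ = ((∑ a, ∑ b, ∑ cc, ∑ e, Gfun u v a b cc e))^k * (Mh / m) := by
                  rw [fact4]
              _ ≤ ((2:ℝ)^d * (3 * (α * β)))^k * (Mh / m) := by
                  refine mul_le_mul_of_nonneg_right ?_ hMdm
                  exact pow_le_pow_left₀ hsum_nonneg (sum_G_le u v) k
              _ = Mh * Ms * (3^k * α^k * β^k / m) := by
                  rw [hMs2]
                  rw [mul_pow, mul_pow, mul_pow]
                  field_simp
          rw [part1]
          exact add_le_add_right part2 _
  -- combine
  have expand : ∑ h : Fin k → Fin d → Fin m, ∑ s : Fin k → Fin d → Bool,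
      (c - ∑ j, tSketch k h s u j * tSketch k h s v j) ^ 2
      = Mh * Ms * c^2
        - 2 * c * (∑ h : Fin k → Fin d → Fin m, ∑ s : Fin k → Fin d → Bool,
            (∑ j, tSketch k h s u j * tSketch k h s v j))
        + ∑ h : Fin k → Fin d → Fin m, ∑ s : Fin k → Fin d → Bool,
            (∑ j, tSketch k h s u j * tSketch k h s v j)^2 := by
    have pw : ∀ (h : Fin k → Fin d → Fin m) (s : Fin k → Fin d → Bool),
        (c - ∑ j, tSketch k h s u j * tSketch k h s v j) ^ 2
        = c^2 - 2 * c * (∑ j, tSketch k h s u j * tSketch k h s v j)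
          + (∑ j, tSketch k h s u j * tSketch k h s v j)^2 := by
      intro h s; ring
    simp only [pw, Finset.sum_add_distrib, Finset.sum_sub_distrib, ← Finset.mul_sum]
    rw [hMh, hMs]
    simp [Finset.sum_const, Finset.card_univ, mul_assoc]
    try ring
  rw [expand, key1]
  nlinarith [key2]


end TSAux

open TSAux in
/-- **Variance bound for TensorSketch** (Avron et al.). -/
theorem tensorSketch_variance_bound {n d m : ℕ} [NeZero m] (k : ℕ) (hk : 1 ≤ k)
    (U V : Matrix (Fin n) (Fin d) ℝ) :
    expHS (fun (h : Fin k → Fin d → Fin m) (s : Fin k → Fin d → Bool) =>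
      frobSq ((Matrix.of fun i j => ((U * Vᵀ) i j) ^ k)
        - tSketchM k h s U * (tSketchM k h s V)ᵀ))
    ≤ (2 + 3 ^ k) * (∑ i, (∑ j, (U i j) ^ 2) ^ k) * (∑ i, (∑ j, (V i j) ^ 2) ^ k) / m := by
  classical
  have hm0 : (0:ℝ) < m := by exact_mod_cast (NeZero.pos m)
  have hch : (0:ℝ) < (Fintype.card (Fin k → Fin d → Fin m) : ℝ) := by
    have : 0 < Fintype.card (Fin k → Fin d → Fin m) := Fintype.card_pos
    exact_mod_cast this
  have hcs : (0:ℝ) < (Fintype.card (Fin k → Fin d → Bool) : ℝ) := by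
    have : 0 < Fintype.card (Fin k → Fin d → Bool) := Fintype.card_pos
    exact_mod_cast this
  have hD : (0:ℝ) < (Fintype.card (Fin k → Fin d → Fin m) : ℝ)
      * (Fintype.card (Fin k → Fin d → Bool)) := mul_pos hch hcs
  unfold expHS
  rw [div_le_iff₀ hD]
  have entry_eq : ∀ (h : Fin k → Fin d → Fin m) (s : Fin k → Fin d → Bool) (r r' : Fin n),
      (((Matrix.of fun i j => ((U * Vᵀ) i j) ^ k)
        - tSketchM k h s U * (tSketchM k h s V)ᵀ) r r')
      = ((∑ a, U r a * V r' a) ^ k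
          - ∑ j, tSketch k h s (U r) j * tSketch k h s (V r') j) := by
    intro h s r r'
    simp [Matrix.sub_apply, Matrix.mul_apply, Matrix.transpose_apply, tSketchM,
      Matrix.of_apply]
  have num_eq : (∑ h : Fin k → Fin d → Fin m, ∑ s : Fin k → Fin d → Bool,
      frobSq ((Matrix.of fun i j => ((U * Vᵀ) i j) ^ k)
        - tSketchM k h s U * (tSketchM k h s V)ᵀ))
      = ∑ r : Fin n, ∑ r' : Fin n, ∑ h : Fin k → Fin d → Fin m,
          ∑ s : Fin k → Fin d → Bool,
          ((∑ a, U r a * V r' a) ^ k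
            - ∑ j, tSketch k h s (U r) j * tSketch k h s (V r') j)^2 := by
    calc (∑ h : Fin k → Fin d → Fin m, ∑ s : Fin k → Fin d → Bool,
        frobSq ((Matrix.of fun i j => ((U * Vᵀ) i j) ^ k)
          - tSketchM k h s U * (tSketchM k h s V)ᵀ))
        = ∑ h : Fin k → Fin d → Fin m, ∑ s : Fin k → Fin d → Bool,
            ∑ r : Fin n, ∑ r' : Fin n,
            ((∑ a, U r a * V r' a) ^ k
              - ∑ j, tSketch k h s (U r) j * tSketch k h s (V r') j)^2 := by
          refine Finset.sum_congr rfl (fun h _ => Finset.sum_congr rfl (fun s _ => ?_))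
          unfold frobSq
          exact Finset.sum_congr rfl (fun r _ => Finset.sum_congr rfl (fun r' _ => by
            rw [entry_eq h s r r']))
      _ = ∑ r : Fin n, ∑ r' : Fin n, ∑ h : Fin k → Fin d → Fin m,
            ∑ s : Fin k → Fin d → Bool,
            ((∑ a, U r a * V r' a) ^ k
              - ∑ j, tSketch k h s (U r) j * tSketch k h s (V r') j)^2 := sum4_comm _
  rw [num_eq]
  have step1 : (∑ r : Fin n, ∑ r' : Fin n, ∑ h : Fin k → Fin d → Fin m,
      ∑ s : Fin k → Fin d → Bool,
      ((∑ a, U r a * V r' a) ^ k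
        - ∑ j, tSketch k h s (U r) j * tSketch k h s (V r') j)^2)
      ≤ ∑ r : Fin n, ∑ r' : Fin n,
        (Fintype.card (Fin k → Fin d → Fin m) : ℝ) * (Fintype.card (Fin k → Fin d → Bool))
          * (3 ^ k * (∑ a, (U r a) ^ 2) ^ k * (∑ a, (V r' a) ^ 2) ^ k / m) :=
    Finset.sum_le_sum (fun r _ => Finset.sum_le_sum (fun r' _ => entry_bound (U r) (V r')))
  refine step1.trans ?_
  set D := (Fintype.card (Fin k → Fin d → Fin m) : ℝ)
      * (Fintype.card (Fin k → Fin d → Bool)) with hDdef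
  set P := ∑ r : Fin n, (∑ a, (U r a) ^ 2) ^ k with hP
  set Q := ∑ r : Fin n, (∑ a, (V r a) ^ 2) ^ k with hQ
  have hPn : 0 ≤ P := Finset.sum_nonneg (fun r _ => pow_nonneg
    (Finset.sum_nonneg (fun a _ => sq_nonneg _)) k)
  have hQn : 0 ≤ Q := Finset.sum_nonneg (fun r _ => pow_nonneg
    (Finset.sum_nonneg (fun a _ => sq_nonneg _)) k)
  have sum_eq : (∑ r : Fin n, ∑ r' : Fin n,
      D * (3 ^ k * (∑ a, (U r a) ^ 2) ^ k * (∑ a, (V r' a) ^ 2) ^ k / m))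
      = (3:ℝ)^k * P * Q * D / m := by
    have pw : ∀ r r' : Fin n,
        D * (3 ^ k * (∑ a, (U r a) ^ 2) ^ k * (∑ a, (V r' a) ^ 2) ^ k / m)
        = (∑ a, (U r a) ^ 2) ^ k * ((∑ a, (V r' a) ^ 2) ^ k * ((3:ℝ)^k * D / m)) := by
      intro r r'; ring
    simp only [pw]
    simp only [← Finset.mul_sum, ← Finset.sum_mul]
    rw [← hP, ← hQ]
    ring
  rw [sum_eq]
  calc (3:ℝ)^k * P * Q * D / m ≤ (2 + 3^k) * P * Q * D / m := by
        have h2 : (0:ℝ) ≤ P * Q * D := mul_nonneg (mul_nonneg hPn hQn) hD.le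
        have h3 : (3:ℝ)^k ≤ 2 + 3^k := by linarith
        have : (3:ℝ)^k * P * Q * D ≤ (2 + 3^k) * P * Q * D := by nlinarith
        exact div_le_div_of_nonneg_right this hm0.le
    _ = (2 + 3 ^ k) * P * Q / m * D := by ring
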